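/- Under Assumption A1 and the null hypothesis H0, the empirical variance of the squared errors satisfies γ_n(0) := n^{−1} Σ_{t=1}^n (u_t² − E(u_t²))² = (E(ε⁴) − 1) ∫₀¹ g⁴(r) dr + o_p(1) as n → ∞. -/

import Mathlib

open MeasureTheory ProbabilityTheory Filter Finset Set Topology

noncomputable section

/-- A function is piecewise Lipschitz on `(0,1]`: there are finitely many mutually disjoint
intervals covering `(0,1]` on each of which the function is Lipschitz. -/
def PiecewiseLipschitzOn01 (g : ℝ → ℝ) : Prop :=
  ∃ (q : ℕ) (I : Fin q → Set ℝ) (C : Fin q → NNReal),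
    (∀ l, (I l).OrdConnected) ∧ Pairwise (Function.onFun Disjoint I) ∧
      (⋃ l, I l) = Set.Ioc (0 : ℝ) 1 ∧ ∀ l, LipschitzOnWith (C l) g (I l)

/-- Convergence in distribution (weak convergence of the laws of `X n` under `μ` to `ν`). -/
def TendstoInDistribution {Ω E : Type*} [MeasurableSpace Ω] [MeasurableSpace E]
    [TopologicalSpace E] (X : ℕ → Ω → E) (μ : Measure Ω) (ν : Measure E) : Prop :=
  ∀ f : BoundedContinuousFunction E ℝ,
    Tendsto (fun n => ∫ ω, f (X n ω) ∂μ) atTop (𝓝 (∫ x, f x ∂ν))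

/-- `X n = o_p(1)` : convergence to zero in probability. -/
def TendstoZeroInProb {Ω : Type*} [MeasurableSpace Ω] (μ : Measure Ω) (X : ℕ → Ω → ℝ) : Prop :=
  ∀ δ : ℝ, 0 < δ → Tendsto (fun n => (μ {ω | δ ≤ |X n ω|}).toReal) atTop (𝓝 0)

/-- An i.i.d. sequence of real random variables (indexed by `ι`, with reference index `t0`). -/
def IsIIDSeq {Ω : Type*} [MeasurableSpace Ω] (μ : Measure Ω) {ι : Type*}
    (ε : ι → Ω → ℝ) (t0 : ι) : Prop :=
  (∀ t, Measurable (ε t)) ∧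
    iIndepFun ε μ ∧
    ∀ t, IdentDistrib (ε t) (ε t0) μ μ

/-- The chi-square law with `m` degrees of freedom, as a Gamma(m/2, 1/2) law. -/
def chiSqMeasure (m : ℕ) : Measure ℝ := gammaMeasure ((m : ℝ) / 2) (1 / 2)

/-- `ν` is a centered Gaussian law on `Fin m → ℝ` with covariance matrix `S`
(characterized through one-dimensional projections). -/
def IsCenteredGaussianWithCov {m : ℕ} (ν : Measure (Fin m → ℝ))
    (S : Matrix (Fin m) (Fin m) ℝ) : Prop :=
  IsProbabilityMeasure ν ∧ ∀ a : Fin m → ℝ,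
    ν.map (fun z => ∑ i, a i * z i) =
      gaussianReal 0 (Real.toNNReal (∑ i, ∑ j, a i * S i j * a j))

/-- The matrix `Σ = (v/4) M`, `M` having diagonal entries `a` and off-diagonal entries 1. -/
def sigmaMat (m : ℕ) (v a : ℝ) : Matrix (Fin m) (Fin m) ℝ :=
  Matrix.of fun i j => (v / 4) * (if i = j then a else 1)

/-- The time-varying volatility `h_t = g(t/n)`. -/
def hvol (g : ℝ → ℝ) (n : ℕ) (t : ℤ) : ℝ := g ((t : ℝ) / (n : ℝ))

/-- The autoregression residual `u_t(θ)`, with the convention `u_t(θ) = 0` for `t ≤ 0`. -/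
def resid {Ω : Type*} (x : ℕ → ℤ → Ω → ℝ) {p : ℕ} (θ : Fin p → ℝ) (n : ℕ) (t : ℤ)
    (ω : Ω) : ℝ :=
  if 1 ≤ t then x n t ω - ∑ i : Fin p, θ i * x n (t - ((i : ℤ) + 1)) ω else 0

/-- The design matrix of the GLS estimator. -/
def glsMat {Ω : Type*} (x : ℕ → ℤ → Ω → ℝ) (g : ℝ → ℝ) (p n : ℕ) (ω : Ω) :
    Matrix (Fin p) (Fin p) ℝ :=
  Matrix.of fun i j => ∑ t ∈ Finset.Icc (1 : ℤ) (n : ℤ),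
    ((hvol g n t) ^ 2)⁻¹ * (x n (t - 1 - (i : ℤ)) ω * x n (t - 1 - (j : ℤ)) ω)

def glsVec {Ω : Type*} (x : ℕ → ℤ → Ω → ℝ) (g : ℝ → ℝ) (p n : ℕ) (ω : Ω) : Fin p → ℝ :=
  fun i => ∑ t ∈ Finset.Icc (1 : ℤ) (n : ℤ),
    ((hvol g n t) ^ 2)⁻¹ * (x n t ω * x n (t - 1 - (i : ℤ)) ω)

/-- The GLS estimator `θ̂`. -/
def glsEst {Ω : Type*} (x : ℕ → ℤ → Ω → ℝ) (g : ℝ → ℝ) (p n : ℕ) (ω : Ω) : Fin p → ℝ :=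
  Matrix.mulVec (glsMat x g p n ω)⁻¹ (glsVec x g p n ω)

/-- The design matrix of the OLS estimator. -/
def olsMat {Ω : Type*} (x : ℕ → ℤ → Ω → ℝ) (p n : ℕ) (ω : Ω) : Matrix (Fin p) (Fin p) ℝ :=
  Matrix.of fun i j => ∑ t ∈ Finset.Icc (1 : ℤ) (n : ℤ),
    x n (t - 1 - (i : ℤ)) ω * x n (t - 1 - (j : ℤ)) ω

def olsVec {Ω : Type*} (x : ℕ → ℤ → Ω → ℝ) (p n : ℕ) (ω : Ω) : Fin p → ℝ :=
  fun i => ∑ t ∈ Finset.Icc (1 : ℤ) (n : ℤ), x n t ω * x n (t - 1 - (i : ℤ)) ω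

/-- The OLS estimator `θ̌`. -/
def olsEst {Ω : Type*} (x : ℕ → ℤ → Ω → ℝ) (p n : ℕ) (ω : Ω) : Fin p → ℝ :=
  Matrix.mulVec (olsMat x p n ω)⁻¹ (olsVec x p n ω)

/-- The normalized score vector `S(θ)` (built with the true volatility `h_t`). -/
def glsScore {Ω : Type*} (x : ℕ → ℤ → Ω → ℝ) (g : ℝ → ℝ) (p m n : ℕ) (θ : Fin p → ℝ)
    (ω : Ω) : Fin m → ℝ :=
  fun j => (1 / (2 * Real.sqrt (n : ℝ))) * ∑ t ∈ Finset.Icc (1 : ℤ) (n : ℤ),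
    ((resid x θ n t ω ^ 2 / hvol g n t ^ 2 - 1) *
      (resid x θ n (t - ((j : ℤ) + 1)) ω ^ 2 / hvol g n t ^ 2))

/-- `n⁻¹ Σ u_t(θ̂)⁴ h_t⁻⁴`, the estimator of `E ε⁴`. -/
def glsE4 {Ω : Type*} (x : ℕ → ℤ → Ω → ℝ) (g : ℝ → ℝ) (p n : ℕ) (ω : Ω) : ℝ :=
  (n : ℝ)⁻¹ * ∑ t ∈ Finset.Icc (1 : ℤ) (n : ℤ),
    resid x (glsEst x g p n ω) n t ω ^ 4 / hvol g n t ^ 4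

def glsE2 {Ω : Type*} (x : ℕ → ℤ → Ω → ℝ) (g : ℝ → ℝ) (p n : ℕ) (ω : Ω) : ℝ :=
  (n : ℝ)⁻¹ * ∑ t ∈ Finset.Icc (1 : ℤ) (n : ℤ),
    resid x (glsEst x g p n ω) n t ω ^ 2 / hvol g n t ^ 2

def glsE8 {Ω : Type*} (x : ℕ → ℤ → Ω → ℝ) (g : ℝ → ℝ) (p n : ℕ) (ω : Ω) : ℝ :=
  (n : ℝ)⁻¹ * ∑ t ∈ Finset.Icc (1 : ℤ) (n : ℤ),
    resid x (glsEst x g p n ω) n t ω ^ 8 / hvol g n t ^ 8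

/-- The estimated weight matrix `Σ̂` of the (infeasible) GLS ARCH-LM statistic. -/
def glsSigma {Ω : Type*} (x : ℕ → ℤ → Ω → ℝ) (g : ℝ → ℝ) (p m n : ℕ) (ω : Ω) :
    Matrix (Fin m) (Fin m) ℝ :=
  sigmaMat m (glsE4 x g p n ω - (glsE2 x g p n ω) ^ 2) (glsE4 x g p n ω)

/-- The (infeasible) GLS ARCH-LM statistic `Q_GLS`. -/
def QGLS {Ω : Type*} (x : ℕ → ℤ → Ω → ℝ) (g : ℝ → ℝ) (p m n : ℕ) (ω : Ω) : ℝ :=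
  dotProduct (glsScore x g p m n (glsEst x g p n ω) ω)
    (Matrix.mulVec (glsSigma x g p m n ω)⁻¹ (glsScore x g p m n (glsEst x g p n ω) ω))

/-- The (infeasible) empirical autocovariance `γ̂(j)` of the squared GLS residuals. -/
def glsGamma {Ω : Type*} (x : ℕ → ℤ → Ω → ℝ) (g : ℝ → ℝ) (p n j : ℕ) (ω : Ω) : ℝ :=
  (n : ℝ)⁻¹ * ∑ t ∈ Finset.Icc ((j : ℤ) + 1) (n : ℤ),
    (resid x (glsEst x g p n ω) n t ω ^ 2 - hvol g n t ^ 2) *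
      (resid x (glsEst x g p n ω) n (t - (j : ℤ)) ω ^ 2 - hvol g n (t - (j : ℤ)) ^ 2)

def glsOmega4 {Ω : Type*} (x : ℕ → ℤ → Ω → ℝ) (g : ℝ → ℝ) (p n : ℕ) (ω : Ω) : ℝ :=
  ((n : ℝ)⁻¹ * ∑ t ∈ Finset.Icc (1 : ℤ) (n : ℤ), resid x (glsEst x g p n ω) n t ω ^ 4) /
    glsE4 x g p n ω

def glsOmega8 {Ω : Type*} (x : ℕ → ℤ → Ω → ℝ) (g : ℝ → ℝ) (p n : ℕ) (ω : Ω) : ℝ :=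
  ((n : ℝ)⁻¹ * ∑ t ∈ Finset.Icc (1 : ℤ) (n : ℤ), resid x (glsEst x g p n ω) n t ω ^ 8) /
    glsE8 x g p n ω

/-- The (infeasible) GLS Ljung–Box type portmanteau statistic `Q*_GLS`. -/
def QstarGLS {Ω : Type*} (x : ℕ → ℤ → Ω → ℝ) (g : ℝ → ℝ) (p m n : ℕ) (ω : Ω) : ℝ :=
  ((n : ℝ) * ((n : ℝ) + 2) * ∑ i ∈ Finset.Icc 1 m,
      (glsGamma x g p n i ω / glsGamma x g p n 0 ω) ^ 2 / ((n : ℝ) - (i : ℝ))) *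
    (glsOmega4 x g p n ω ^ 2 / glsOmega8 x g p n ω)

/-- Kernel weights entries `K_{ti}` (with `K_{tt} = 0`). -/
def kerEntry (K : ℝ → ℝ) (n : ℕ) (b : ℝ) (t i : ℤ) : ℝ :=
  if t = i then 0 else K (((t : ℝ) - (i : ℝ)) / ((n : ℝ) * b))

/-- Kernel weights `w_{ti}`. -/
def kerWeight (K : ℝ → ℝ) (n : ℕ) (b : ℝ) (t i : ℤ) : ℝ :=
  kerEntry K n b t i / ∑ j ∈ Finset.Icc (1 : ℤ) (n : ℤ), kerEntry K n b t j

/-- The kernel estimator `ĥ_t²` of the variance, built from the squared OLS residuals. -/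
def hhatSq {Ω : Type*} (x : ℕ → ℤ → Ω → ℝ) (K : ℝ → ℝ) (p n : ℕ) (b : ℝ) (t : ℤ)
    (ω : Ω) : ℝ :=
  ∑ i ∈ Finset.Icc (1 : ℤ) (n : ℤ), kerWeight K n b t i * resid x (olsEst x p n ω) n i ω ^ 2

/-- The design matrix of the adaptive (ALS) estimator. -/
def alsMat {Ω : Type*} (x : ℕ → ℤ → Ω → ℝ) (K : ℝ → ℝ) (p n : ℕ) (b : ℝ) (ω : Ω) :
    Matrix (Fin p) (Fin p) ℝ :=
  Matrix.of fun i j => ∑ t ∈ Finset.Icc (1 : ℤ) (n : ℤ),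
    (hhatSq x K p n b t ω)⁻¹ * (x n (t - 1 - (i : ℤ)) ω * x n (t - 1 - (j : ℤ)) ω)

def alsVec {Ω : Type*} (x : ℕ → ℤ → Ω → ℝ) (K : ℝ → ℝ) (p n : ℕ) (b : ℝ) (ω : Ω) :
    Fin p → ℝ :=
  fun i => ∑ t ∈ Finset.Icc (1 : ℤ) (n : ℤ),
    (hhatSq x K p n b t ω)⁻¹ * (x n t ω * x n (t - 1 - (i : ℤ)) ω)

/-- The adaptive estimator `θ̃`. -/
def alsEst {Ω : Type*} (x : ℕ → ℤ → Ω → ℝ) (K : ℝ → ℝ) (p n : ℕ) (b : ℝ) (ω : Ω) :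
    Fin p → ℝ :=
  Matrix.mulVec (alsMat x K p n b ω)⁻¹ (alsVec x K p n b ω)

/-- The approximated (adaptive) score vector `S̃(θ̃)`. -/
def alsScore {Ω : Type*} (x : ℕ → ℤ → Ω → ℝ) (K : ℝ → ℝ) (p m n : ℕ) (b : ℝ) (ω : Ω) :
    Fin m → ℝ :=
  fun j => (1 / (2 * Real.sqrt (n : ℝ))) * ∑ t ∈ Finset.Icc (1 : ℤ) (n : ℤ),
    ((resid x (alsEst x K p n b ω) n t ω ^ 2 / hhatSq x K p n b t ω - 1) *
      (resid x (alsEst x K p n b ω) n (t - ((j : ℤ) + 1)) ω ^ 2 / hhatSq x K p n b t ω))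

def alsE4 {Ω : Type*} (x : ℕ → ℤ → Ω → ℝ) (K : ℝ → ℝ) (p n : ℕ) (b : ℝ) (ω : Ω) : ℝ :=
  (n : ℝ)⁻¹ * ∑ t ∈ Finset.Icc (1 : ℤ) (n : ℤ),
    resid x (alsEst x K p n b ω) n t ω ^ 4 / (hhatSq x K p n b t ω) ^ 2

def alsE2 {Ω : Type*} (x : ℕ → ℤ → Ω → ℝ) (K : ℝ → ℝ) (p n : ℕ) (b : ℝ) (ω : Ω) : ℝ :=
  (n : ℝ)⁻¹ * ∑ t ∈ Finset.Icc (1 : ℤ) (n : ℤ),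
    resid x (alsEst x K p n b ω) n t ω ^ 2 / hhatSq x K p n b t ω

def alsE8 {Ω : Type*} (x : ℕ → ℤ → Ω → ℝ) (K : ℝ → ℝ) (p n : ℕ) (b : ℝ) (ω : Ω) : ℝ :=
  (n : ℝ)⁻¹ * ∑ t ∈ Finset.Icc (1 : ℤ) (n : ℤ),
    resid x (alsEst x K p n b ω) n t ω ^ 8 / (hhatSq x K p n b t ω) ^ 4

/-- The estimated weight matrix `Σ̃` of the adaptive ARCH-LM statistic. -/
def alsSigma {Ω : Type*} (x : ℕ → ℤ → Ω → ℝ) (K : ℝ → ℝ) (p m n : ℕ) (b : ℝ) (ω : Ω) :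
    Matrix (Fin m) (Fin m) ℝ :=
  sigmaMat m (alsE4 x K p n b ω - (alsE2 x K p n b ω) ^ 2) (alsE4 x K p n b ω)

/-- The adaptive ARCH-LM statistic `Q_ALS`. -/
def QALS {Ω : Type*} (x : ℕ → ℤ → Ω → ℝ) (K : ℝ → ℝ) (p m n : ℕ) (b : ℝ) (ω : Ω) : ℝ :=
  dotProduct (alsScore x K p m n b ω)
    (Matrix.mulVec (alsSigma x K p m n b ω)⁻¹ (alsScore x K p m n b ω))

/-- The adaptive empirical autocovariance `γ̃(j)` of the squared residuals. -/
def alsGamma {Ω : Type*} (x : ℕ → ℤ → Ω → ℝ) (K : ℝ → ℝ) (p n j : ℕ) (b : ℝ) (ω : Ω) : ℝ :=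
  (n : ℝ)⁻¹ * ∑ t ∈ Finset.Icc ((j : ℤ) + 1) (n : ℤ),
    (resid x (alsEst x K p n b ω) n t ω ^ 2 - hhatSq x K p n b t ω) *
      (resid x (alsEst x K p n b ω) n (t - (j : ℤ)) ω ^ 2 - hhatSq x K p n b (t - (j : ℤ)) ω)

def alsOmega4 {Ω : Type*} (x : ℕ → ℤ → Ω → ℝ) (K : ℝ → ℝ) (p n : ℕ) (b : ℝ) (ω : Ω) : ℝ :=
  ((n : ℝ)⁻¹ * ∑ t ∈ Finset.Icc (1 : ℤ) (n : ℤ), resid x (alsEst x K p n b ω) n t ω ^ 4) /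
    alsE4 x K p n b ω

def alsOmega8 {Ω : Type*} (x : ℕ → ℤ → Ω → ℝ) (K : ℝ → ℝ) (p n : ℕ) (b : ℝ) (ω : Ω) : ℝ :=
  ((n : ℝ)⁻¹ * ∑ t ∈ Finset.Icc (1 : ℤ) (n : ℤ), resid x (alsEst x K p n b ω) n t ω ^ 8) /
    alsE8 x K p n b ω

/-- The adaptive portmanteau statistic `Q*_ALS`. -/
def QstarALS {Ω : Type*} (x : ℕ → ℤ → Ω → ℝ) (K : ℝ → ℝ) (p m n : ℕ) (b : ℝ) (ω : Ω) : ℝ :=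
  ((n : ℝ) * ((n : ℝ) + 2) * ∑ i ∈ Finset.Icc 1 m,
      (alsGamma x K p n i b ω / alsGamma x K p n 0 b ω) ^ 2 / ((n : ℝ) - (i : ℝ))) *
    (alsOmega4 x K p n b ω ^ 2 / alsOmega8 x K p n b ω)

/-- The squared ARCH(1)-type error process started in the infinite past,
`u_t² = Σ_{i≥0} α^i h_{t-i}² ε_{t-i}² ⋯ ε_t²`, with `h_l = c0` for `l ≤ 0`. -/
def usqARCH {Ω : Type*} (g : ℝ → ℝ) (c0 α : ℝ) (ε : ℤ → Ω → ℝ) (n : ℕ) (t : ℤ) (ω : Ω) : ℝ :=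
  ∑' i : ℕ, α ^ i * (if 1 ≤ t - (i : ℤ) then g (((t : ℝ) - (i : ℝ)) / (n : ℝ)) else c0) ^ 2 *
    ∏ k ∈ Finset.range (i + 1), (ε (t - (k : ℤ)) ω) ^ 2

/-- Assumption A2(i) on the kernel `K`. -/
def KernelAssumption (K : ℝ → ℝ) : Prop :=
  Measurable K ∧ (∀ v, 0 ≤ K v) ∧ (∃ CK : ℝ, ∀ v, K v ≤ CK) ∧ (∫ v, K v = 1) ∧
    MonotoneOn K (Set.Iic 0) ∧ AntitoneOn K (Set.Ici 0) ∧
    Integrable (fun v => v ^ 2 * K v) ∧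
    (∃ (S : Finset ℝ) (K' : ℝ → ℝ), (∀ v ∉ S, HasDerivAt K (K' v) v) ∧
      Integrable (fun v => |v * K' v|)) ∧
    (∃ τ : ℝ, 0 < τ ∧
      Integrable (fun s => |s| ^ τ * ‖VectorFourier.fourierIntegral Real.fourierChar volume (innerₗ ℝ) (fun v => (K v : ℂ)) s‖))



lemma riemann_aux (g : ℝ → ℝ) (C : ℝ) (hC : ∀ r ∈ Set.Ioc (0:ℝ) 1, |g r| ≤ C)
    (hglip : PiecewiseLipschitzOn01 g) :
    Tendsto (fun n : ℕ => (n:ℝ)⁻¹ * ∑ t ∈ Finset.Icc 1 n, g ((t:ℝ)/(n:ℝ)) ^ 4) atTop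
      (𝓝 (∫ r in Set.Ioc (0:ℝ) 1, g r ^ 4)) := by
  obtain ⟨q, I, CL, hIoc, hIdisj, hIunion, hIlip⟩ := hglip
  set f : ℝ → ℝ := fun r => g r ^ 4 with hf
  set F : ℕ → ℝ → ℝ := fun n r => ∑ t ∈ Finset.Icc 1 n,
    Set.indicator (Set.Ioc (((t:ℝ)-1)/(n:ℝ)) ((t:ℝ)/(n:ℝ))) (fun _ => f ((t:ℝ)/(n:ℝ))) r
    with hF
  set μ0 : Measure ℝ := volume.restrict (Set.Ioc (0:ℝ) 1) with hμ0
  haveI : IsFiniteMeasure μ0 := by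
    constructor
    rw [hμ0, Measure.restrict_apply_univ, Real.volume_Ioc]
    exact ENNReal.ofReal_lt_top
  -- key pointwise identity
  have hkey : ∀ (n : ℕ), 1 ≤ n → ∀ r ∈ Set.Ioc (0:ℝ) 1,
      F n r = f ((((⌈(n:ℝ)*r⌉₊ : ℕ)):ℝ)/(n:ℝ)) := by
    intro n hn r hr
    have hn0 : (0:ℝ) < (n:ℝ) := by exact_mod_cast hn
    set t0 : ℕ := ⌈(n:ℝ)*r⌉₊ with ht0
    have hnr0 : 0 < (n:ℝ)*r := mul_pos hn0 hr.1
    have ht01 : 1 ≤ t0 := Nat.ceil_pos.2 hnr0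
    have ht0n : t0 ≤ n := Nat.ceil_le.2 (by
      calc (n:ℝ)*r ≤ (n:ℝ)*1 := by nlinarith [hr.2]
      _ = (n:ℝ) := by ring)
    have hmemt0 : r ∈ Set.Ioc (((t0:ℝ)-1)/(n:ℝ)) ((t0:ℝ)/(n:ℝ)) := by
      constructor
      · rw [div_lt_iff₀ hn0]
        have := Nat.ceil_lt_add_one hnr0.le
        rw [← ht0] at this
        nlinarith [this]
      · rw [le_div_iff₀ hn0]
        have := Nat.le_ceil ((n:ℝ)*r)
        rw [← ht0] at this
        nlinarith [this]
    simp only [hF]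
    rw [Finset.sum_eq_single_of_mem t0 (Finset.mem_Icc.2 ⟨ht01, ht0n⟩)]
    · simp [Set.indicator_of_mem hmemt0]
    · intro t ht hne
      apply Set.indicator_of_notMem
      intro hmem
      apply hne
      have ht1 : 1 ≤ t := (Finset.mem_Icc.1 ht).1
      have h1 : ((t:ℝ)-1) < (n:ℝ)*r := by
        have := hmem.1; rw [div_lt_iff₀ hn0] at this; nlinarith [this]
      have h2 : (n:ℝ)*r ≤ (t:ℝ) := by
        have := hmem.2; rw [le_div_iff₀ hn0] at this; nlinarith [this]
      symm
      rw [Nat.ceil_eq_iff (show t ≠ 0 by omega)]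
      constructor
      · rw [Nat.cast_sub ht1]; simpa using h1
      · exact h2
    all_goals try rfl
  have hzero : ∀ (n : ℕ) (r : ℝ), r ∉ Set.Ioc (0:ℝ) 1 → F n r = 0 := by
    intro n r hr
    rw [hF]
    apply Finset.sum_eq_zero
    intro t ht
    apply Set.indicator_of_notMem
    intro hmem
    apply hr
    have ht1 : 1 ≤ t := (Finset.mem_Icc.1 ht).1
    have htn : t ≤ n := (Finset.mem_Icc.1 ht).2
    have hn0 : (0:ℝ) < (n:ℝ) := by
      have : 1 ≤ n := le_trans ht1 htn
      exact_mod_cast this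
    constructor
    · refine lt_of_le_of_lt ?_ hmem.1
      apply div_nonneg _ hn0.le
      have : (1:ℝ) ≤ (t:ℝ) := by exact_mod_cast ht1
      linarith
    · refine le_trans hmem.2 ?_
      rw [div_le_one hn0]
      exact_mod_cast htn
  have hA : ∀ (n : ℕ) (r : ℝ), ‖F n r‖ ≤ C ^ 4 := by
    intro n r
    have hC4 : (0:ℝ) ≤ C ^ 4 := by positivity
    by_cases hr : r ∈ Set.Ioc (0:ℝ) 1
    · by_cases hn : 1 ≤ n
      · rw [hkey n hn r hr]
        have hn0 : (0:ℝ) < (n:ℝ) := by exact_mod_cast hn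
        have hmem : (((⌈(n:ℝ)*r⌉₊:ℕ)):ℝ)/(n:ℝ) ∈ Set.Ioc (0:ℝ) 1 := by
          constructor
          · apply div_pos _ hn0
            have : 1 ≤ ⌈(n:ℝ)*r⌉₊ := Nat.ceil_pos.2 (mul_pos hn0 hr.1)
            exact_mod_cast this
          · rw [div_le_one hn0]
            have : ⌈(n:ℝ)*r⌉₊ ≤ n := Nat.ceil_le.2 (by nlinarith [hr.2])
            exact_mod_cast this
        have := hC _ hmem
        rw [hf]
        calc ‖g ((((⌈(n:ℝ)*r⌉₊:ℕ)):ℝ)/(n:ℝ)) ^ 4‖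
            = |g ((((⌈(n:ℝ)*r⌉₊:ℕ)):ℝ)/(n:ℝ))| ^ 4 := by
              rw [Real.norm_eq_abs, abs_pow]
          _ ≤ C ^ 4 := by
              apply pow_le_pow_left₀ (abs_nonneg _) this
      · have hn0 : n = 0 := by omega
        subst hn0
        simp [hF, hC4]
    · rw [hzero n r hr]
      simpa using hC4
  -- integral identity
  have hint : ∀ (n : ℕ), 1 ≤ n →
      ∫ r, F n r ∂μ0 = (n:ℝ)⁻¹ * ∑ t ∈ Finset.Icc 1 n, g ((t:ℝ)/(n:ℝ)) ^ 4 := by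
    intro n hn
    have hn0 : (0:ℝ) < (n:ℝ) := by exact_mod_cast hn
    rw [hF]
    rw [MeasureTheory.integral_finset_sum]
    · rw [Finset.mul_sum]
      apply Finset.sum_congr rfl
      intro t ht
      have ht1 : 1 ≤ t := (Finset.mem_Icc.1 ht).1
      have htn : t ≤ n := (Finset.mem_Icc.1 ht).2
      have hsub : Set.Ioc (((t:ℝ)-1)/(n:ℝ)) ((t:ℝ)/(n:ℝ)) ⊆ Set.Ioc (0:ℝ) 1 := by
        apply Set.Ioc_subset_Ioc
        · apply div_nonneg _ hn0.le
          have : (1:ℝ) ≤ (t:ℝ) := by exact_mod_cast ht1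
          linarith
        · rw [div_le_one hn0]; exact_mod_cast htn
      rw [hμ0, MeasureTheory.setIntegral_indicator measurableSet_Ioc,
        Set.inter_eq_self_of_subset_right hsub, MeasureTheory.setIntegral_const,
        measureReal_def, Real.volume_Ioc, smul_eq_mul]
      rw [show (t:ℝ)/(n:ℝ) - ((t:ℝ)-1)/(n:ℝ) = (n:ℝ)⁻¹ by field_simp; ring,
        ENNReal.toReal_ofReal (by positivity)]
    · intro t ht
      exact (integrable_const _).indicator measurableSet_Ioc
  -- a.e. convergence
  have hB : (⋃ l, {r : ℝ | IsGreatest (I l) r}).Finite := by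
    apply Set.finite_iUnion
    intro l
    apply Set.Subsingleton.finite
    intro a ha b hb
    exact IsGreatest.unique ha hb
  have hlim : ∀ᵐ r ∂μ0, Tendsto (fun n => F n r) atTop (𝓝 (f r)) := by
    have h1 : ∀ᵐ r ∂μ0, r ∈ Set.Ioc (0:ℝ) 1 := ae_restrict_mem measurableSet_Ioc
    have h2 : ∀ᵐ r ∂μ0, r ∉ (⋃ l, {r : ℝ | IsGreatest (I l) r}) := by
      apply ae_restrict_of_ae
      exact measure_eq_zero_iff_ae_notMem.1 (hB.measure_zero _)
    filter_upwards [h1, h2] with r hr hrB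
    -- find the piece containing r with a larger element
    have hrI : r ∈ ⋃ l, I l := by rw [hIunion]; exact hr
    obtain ⟨l, hl⟩ := Set.mem_iUnion.1 hrI
    have hnotg : ¬ IsGreatest (I l) r := by
      intro h; exact hrB (Set.mem_iUnion.2 ⟨l, h⟩)
    have hex : ∃ s' ∈ I l, r < s' := by
      by_contra h
      push_neg at h
      exact hnotg ⟨hl, fun b hb => le_of_not_gt (fun hlt => absurd hb (fun hb' => by
        have := h b hb'; exact absurd hlt (not_lt.2 this)))⟩
    obtain ⟨s', hs'I, hrs'⟩ := hex
    set x : ℕ → ℝ := fun n => (((⌈(n:ℝ)*r⌉₊:ℕ)):ℝ)/(n:ℝ) with hx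
    -- eventually bounds
    have hxbd : ∀ᶠ n in atTop, r ≤ x n ∧ x n ≤ r + ((n:ℝ))⁻¹ := by
      filter_upwards [eventually_ge_atTop 1] with n hn
      have hn0 : (0:ℝ) < (n:ℝ) := by exact_mod_cast hn
      constructor
      · rw [hx, le_div_iff₀ hn0, mul_comm]
        exact Nat.le_ceil _
      · rw [hx, div_le_iff₀ hn0]
        have h := Nat.ceil_lt_add_one (mul_pos hn0 hr.1).le
        have : ((⌈(n:ℝ)*r⌉₊:ℕ):ℝ) ≤ (n:ℝ)*r + 1 := h.le
        calc ((⌈(n:ℝ)*r⌉₊:ℕ):ℝ) ≤ (n:ℝ)*r + 1 := this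
          _ = (r + ((n:ℝ))⁻¹) * (n:ℝ) := by field_simp
    have hxtend : Tendsto x atTop (𝓝 r) := by
      have hlow : ∀ᶠ n in atTop, r ≤ x n := hxbd.mono fun n h => h.1
      have hhigh : ∀ᶠ n in atTop, x n ≤ r + ((n:ℝ))⁻¹ := hxbd.mono fun n h => h.2
      have htop : Tendsto (fun n : ℕ => r + ((n:ℝ))⁻¹) atTop (𝓝 r) := by
        have : Tendsto (fun n : ℕ => ((n:ℝ))⁻¹) atTop (𝓝 0) :=
          tendsto_inv_atTop_nhds_zero_nat
        simpa using tendsto_const_nhds.add this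
      exact tendsto_of_tendsto_of_tendsto_of_le_of_le' tendsto_const_nhds htop hlow hhigh
    have hxI : ∀ᶠ n in atTop, x n ∈ I l := by
      have hev : ∀ᶠ n in atTop, x n ≤ s' := by
        have : ∀ᶠ n in atTop, x n < s' :=
          hxtend.eventually_lt_const hrs'
        exact this.mono fun n h => h.le
      filter_upwards [hxbd, hev] with n h1 h2
      exact (hIoc l).out hl hs'I ⟨h1.1, h2⟩
    have hgtend : Tendsto (fun n => g (x n)) atTop (𝓝 (g r)) := by
      rw [tendsto_iff_dist_tendsto_zero]
      apply squeeze_zero' (Filter.Eventually.of_forall fun n => dist_nonneg)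
        (g := fun n => (CL l : ℝ) * dist (x n) r)
      · filter_upwards [hxI] with n hn
        exact (hIlip l).dist_le_mul _ hn _ hl
      · have hd : Tendsto (fun n => dist (x n) r) atTop (𝓝 0) :=
          tendsto_iff_dist_tendsto_zero.1 hxtend
        simpa using hd.const_mul (CL l : ℝ)
    have hftend : Tendsto (fun n => f (x n)) atTop (𝓝 (f r)) := by
      rw [hf]
      exact hgtend.pow 4
    apply hftend.congr'
    filter_upwards [eventually_ge_atTop 1] with n hn
    exact (hkey n hn r hr).symm
  -- DCT
  have hdct : Tendsto (fun n => ∫ r, F n r ∂μ0) atTop (𝓝 (∫ r, f r ∂μ0)) := by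
    apply MeasureTheory.tendsto_integral_of_dominated_convergence (fun _ => C ^ 4)
    · intro n
      apply Measurable.aestronglyMeasurable
      apply Finset.measurable_sum
      intro t _
      exact (measurable_const.indicator measurableSet_Ioc)
    · exact integrable_const _
    · intro n
      exact Filter.Eventually.of_forall (hA n)
    · exact hlim
  apply hdct.congr'
  filter_upwards [eventually_ge_atTop 1] with n hn
  exact hint n hn

/-- Lemma 1, first part: LLN for the empirical variance of `u_t²`. -/
theorem stmt_3 {Ω : Type*} [MeasurableSpace Ω] (μ : Measure Ω) [IsProbabilityMeasure μ]
    (g : ℝ → ℝ) (hgpos : ∀ r ∈ Set.Ioc (0 : ℝ) 1, 0 < g r)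
    (hgbdd : ∃ C : ℝ, ∀ r ∈ Set.Ioc (0 : ℝ) 1, |g r| ≤ C)
    (hglip : PiecewiseLipschitzOn01 g)
    (ε : ℕ → Ω → ℝ) (hiid : IsIIDSeq μ ε 0)
    (hmean : ∫ ω, ε 0 ω ∂μ = 0) (hvar : ∫ ω, (ε 0 ω) ^ 2 ∂μ = 1)
    (hmom : ∃ s : ℝ, 8 < s ∧ Integrable (fun ω => |ε 0 ω| ^ s) μ) :
    TendstoZeroInProb μ (fun n ω =>
      (n : ℝ)⁻¹ * (∑ t ∈ Finset.Icc 1 n,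
          ((g ((t : ℝ) / (n : ℝ)) * ε t ω) ^ 2 - g ((t : ℝ) / (n : ℝ)) ^ 2) ^ 2) -
        ((∫ ω', (ε 0 ω') ^ 4 ∂μ) - 1) * ∫ r in Set.Ioc (0 : ℝ) 1, g r ^ 4) := by
  obtain ⟨C, hC⟩ := hgbdd
  obtain ⟨hεmeas, hεindep, hεid⟩ := hiid
  obtain ⟨s, hs8, hsint⟩ := hmom
  -- integrability of powers of ε 0
  have hpow : ∀ k : ℕ, (k:ℝ) ≤ s → Integrable (fun ω => (ε 0 ω) ^ k) μ := by
    intro k hk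
    apply Integrable.mono' ((integrable_const (1:ℝ)).add hsint)
    · exact ((hεmeas 0).pow_const k).aestronglyMeasurable
    · filter_upwards with ω
      rw [norm_pow, Real.norm_eq_abs]
      rcases le_or_gt (|ε 0 ω|) 1 with h1 | h1
      · have h2 : |ε 0 ω| ^ k ≤ 1 := pow_le_one₀ (abs_nonneg _) h1
        have h3 : (0:ℝ) ≤ |ε 0 ω| ^ s := Real.rpow_nonneg (abs_nonneg _) s
        simp only [Pi.add_apply]
        linarith
      · have h2 : |ε 0 ω| ^ k = |ε 0 ω| ^ ((k:ℝ)) := (Real.rpow_natCast _ k).symm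
        rw [h2]
        have h3 := Real.rpow_le_rpow_of_exponent_le h1.le hk
        simp only [Pi.add_apply]
        linarith
  have h2int : Integrable (fun ω => (ε 0 ω) ^ 2) μ := hpow 2 (by push_cast; linarith)
  have h4int : Integrable (fun ω => (ε 0 ω) ^ 4) μ := hpow 4 (by push_cast; linarith)
  have h8int : Integrable (fun ω => (ε 0 ω) ^ 8) μ := hpow 8 (by push_cast; linarith)
  set c : ℝ := (∫ ω, (ε 0 ω)^4 ∂μ) - 1 with hc
  set ψ : ℝ → ℝ := fun x => (x^2 - 1)^2 - c with hψ
  have hψmeas : Measurable ψ := by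
    apply Measurable.sub _ measurable_const
    exact ((measurable_id.pow_const 2).sub measurable_const).pow_const 2
  have hψrw : ∀ x : ℝ, ψ x = x^4 - 2*x^2 + (1 - c) := by
    intro x; simp only [hψ]; ring
  have heqψ : (fun ω => ψ (ε 0 ω)) = fun ω => (ε 0 ω)^4 - 2*(ε 0 ω)^2 + (1 - c) := by
    funext ω; rw [hψrw]
  have hmulint : Integrable (fun ω => 2*(ε 0 ω)^2) μ := h2int.const_mul 2
  have hsubint : Integrable (fun ω => (ε 0 ω)^4 - 2*(ε 0 ω)^2) μ := h4int.sub hmulint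
  have hψ0int : Integrable (fun ω => ψ (ε 0 ω)) μ := by
    rw [heqψ]
    exact hsubint.add (integrable_const _)
  have hψ0mean : ∫ ω, ψ (ε 0 ω) ∂μ = 0 := by
    rw [heqψ, integral_add hsubint (integrable_const _),
      integral_sub h4int hmulint, integral_const_mul, hvar, integral_const]
    simp only [measure_univ, probReal_univ, ENNReal.toReal_one, one_smul, smul_eq_mul]
    rw [hc]; ring
  have hψsq_int : Integrable (fun ω => (ψ (ε 0 ω))^2) μ := by
    apply Integrable.mono' ((h8int.const_mul 32).add (integrable_const (32 + 2*c^2)))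
    · exact ((hψmeas.comp (hεmeas 0)).pow_const 2).aestronglyMeasurable
    · filter_upwards with ω
      rw [Real.norm_eq_abs, abs_of_nonneg (sq_nonneg _)]
      simp only [hψ, Pi.add_apply]
      nlinarith [sq_nonneg (ε 0 ω), sq_nonneg ((ε 0 ω)^2 - 1), sq_nonneg ((ε 0 ω)^4 - 1),
        sq_nonneg (((ε 0 ω)^2-1)^2 - c), sq_nonneg (((ε 0 ω)^2-1)^2 + c),
        sq_nonneg ((ε 0 ω)^4 + 1), sq_nonneg ((ε 0 ω)^2)]
  have hY0L2 : MemLp (fun ω => ψ (ε 0 ω)) 2 μ :=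
    (memLp_two_iff_integrable_sq ((hψmeas.comp (hεmeas 0)).aestronglyMeasurable)).2 hψsq_int
  have hYid : ∀ t, IdentDistrib (fun ω => ψ (ε t ω)) (fun ω => ψ (ε 0 ω)) μ μ :=
    fun t => (hεid t).comp hψmeas
  have hYL2 : ∀ t, MemLp (fun ω => ψ (ε t ω)) 2 μ := fun t => ((hYid t).memLp_iff).2 hY0L2
  have hYmean : ∀ t, ∫ ω, ψ (ε t ω) ∂μ = 0 := fun t => ((hYid t).integral_eq).trans hψ0mean
  set V : ℝ := variance (fun ω => ψ (ε 0 ω)) μ with hV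
  have hV0 : 0 ≤ V := variance_nonneg _ _
  set X : ℕ → ℕ → Ω → ℝ := fun n t ω => g ((t:ℝ)/(n:ℝ))^4 * ψ (ε t ω) with hX
  set Z : ℕ → Ω → ℝ := fun n ω => (n:ℝ)⁻¹ * ∑ t ∈ Finset.Icc 1 n, X n t ω with hZ
  have hXL2 : ∀ (n t : ℕ), MemLp (X n t) 2 μ := fun n t => (hYL2 t).const_mul _
  have hXint : ∀ n t, Integrable (X n t) μ := fun n t => (hXL2 n t).integrable one_le_two
  have hZL2 : ∀ n, MemLp (Z n) 2 μ := fun n =>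
    (memLp_finset_sum _ (fun t (_ : t ∈ Finset.Icc 1 n) => hXL2 n t)).const_mul _
  have hZmean : ∀ n, ∫ ω, Z n ω ∂μ = 0 := by
    intro n
    simp only [hZ]
    rw [integral_const_mul, integral_finset_sum _ (fun t _ => hXint n t)]
    have h0 : ∀ t ∈ Finset.Icc 1 n, ∫ ω, X n t ω ∂μ = 0 := by
      intro t _
      simp only [hX]
      rw [integral_const_mul, hYmean t, mul_zero]
    rw [Finset.sum_congr rfl h0, Finset.sum_const, smul_zero, mul_zero]
  have hZvar : ∀ n, 1 ≤ n → variance (Z n) μ ≤ C^8 * V * (n:ℝ)⁻¹ := by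
    intro n hn
    have hn0 : (0:ℝ) < (n:ℝ) := by exact_mod_cast hn
    have hZeq : Z n = fun ω => (n:ℝ)⁻¹ * (∑ t ∈ Finset.Icc 1 n, X n t) ω := by
      funext ω; simp [hZ, Finset.sum_apply]
    have hpair : Set.Pairwise ↑(Finset.Icc 1 n) fun i j => IndepFun (X n i) (X n j) μ := by
      intro i _ j _ hij
      have h := hεindep.indepFun hij
      exact h.comp (hψmeas.const_mul (g ((i:ℝ)/(n:ℝ))^4)) (hψmeas.const_mul (g ((j:ℝ)/(n:ℝ))^4))
    have hvarsum : variance (∑ t ∈ Finset.Icc 1 n, X n t) μ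
        = ∑ t ∈ Finset.Icc 1 n, variance (X n t) μ :=
      IndepFun.variance_sum (fun t _ => hXL2 n t) hpair
    have hbd : ∀ t ∈ Finset.Icc 1 n, variance (X n t) μ ≤ C^8 * V := by
      intro t ht
      have ht1 := (Finset.mem_Icc.1 ht).1
      have htn := (Finset.mem_Icc.1 ht).2
      have hmem : (t:ℝ)/(n:ℝ) ∈ Set.Ioc (0:ℝ) 1 :=
        ⟨div_pos (by exact_mod_cast ht1) hn0, by rw [div_le_one hn0]; exact_mod_cast htn⟩
      have hg := hC _ hmem
      have h1 : variance (X n t) μ = (g ((t:ℝ)/(n:ℝ))^4)^2 * V := by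
        simp only [hX]
        rw [variance_const_mul, (hYid t).variance_eq]
      rw [h1]
      have h3 : |g ((t:ℝ)/(n:ℝ))|^8 ≤ C^8 := pow_le_pow_left₀ (abs_nonneg _) hg 8
      have h2 : (g ((t:ℝ)/(n:ℝ))^4)^2 ≤ C^8 := by
        calc (g ((t:ℝ)/(n:ℝ))^4)^2 = |g ((t:ℝ)/(n:ℝ))^4|^2 := (sq_abs _).symm
          _ = (|g ((t:ℝ)/(n:ℝ))|^4)^2 := by rw [abs_pow]
          _ = |g ((t:ℝ)/(n:ℝ))|^8 := by ring
          _ ≤ C^8 := h3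
      exact mul_le_mul_of_nonneg_right h2 hV0
    calc variance (Z n) μ = ((n:ℝ)⁻¹)^2 * variance (∑ t ∈ Finset.Icc 1 n, X n t) μ := by
          rw [hZeq, variance_const_mul]
      _ = ((n:ℝ)⁻¹)^2 * ∑ t ∈ Finset.Icc 1 n, variance (X n t) μ := by rw [hvarsum]
      _ ≤ ((n:ℝ)⁻¹)^2 * ((n:ℝ) * (C^8 * V)) := by
          apply mul_le_mul_of_nonneg_left _ (by positivity)
          calc ∑ t ∈ Finset.Icc 1 n, variance (X n t) μ
              ≤ ∑ _t ∈ Finset.Icc 1 n, C^8*V := Finset.sum_le_sum hbd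
            _ = (n:ℝ) * (C^8*V) := by
                rw [Finset.sum_const, Nat.card_Icc]
                simp [nsmul_eq_mul]
      _ = C^8 * V * (n:ℝ)⁻¹ := by field_simp
  have hZprob : ∀ δ : ℝ, 0 < δ → Tendsto (fun n => (μ {ω | δ ≤ |Z n ω|}).toReal) atTop (𝓝 0) := by
    intro δ hδ
    refine squeeze_zero' (f := fun n : ℕ => (μ {ω | δ ≤ |Z n ω|}).toReal)
      (g := fun n : ℕ => (C^8 * V / δ^2) * (n:ℝ)⁻¹) (t₀ := atTop)
      (Filter.Eventually.of_forall fun n => ENNReal.toReal_nonneg) ?_ ?_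
    · filter_upwards [eventually_ge_atTop 1] with n hn
      have hcheb := meas_ge_le_variance_div_sq (μ := μ) (hZL2 n) hδ
      have hz0 : (∫ ω, Z n ω ∂μ) = 0 := hZmean n
      rw [hz0] at hcheb
      simp only [sub_zero] at hcheb
      have h1 := ENNReal.toReal_le_of_le_ofReal
        (div_nonneg (variance_nonneg _ _) (sq_nonneg _)) hcheb
      refine le_trans h1 ?_
      have h2 := hZvar n hn
      calc variance (Z n) μ / δ^2 ≤ (C^8 * V * (n:ℝ)⁻¹) / δ^2 := by gcongr
        _ = (C^8 * V / δ^2) * (n:ℝ)⁻¹ := by ring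
    · have h1 : Tendsto (fun n : ℕ => ((n:ℝ))⁻¹) atTop (𝓝 0) :=
        tendsto_inv_atTop_nhds_zero_nat
      simpa using h1.const_mul (C^8 * V / δ^2)
  -- Riemann part
  have hRie := riemann_aux g C hC hglip
  set L : ℝ := ∫ r in Set.Ioc (0:ℝ) 1, g r ^ 4 with hL
  set R : ℕ → ℝ := fun n => (n:ℝ)⁻¹ * ∑ t ∈ Finset.Icc 1 n, g ((t:ℝ)/(n:ℝ))^4 - L with hR
  have hRtend : Tendsto R atTop (𝓝 0) := by
    have h1 := hRie.sub (tendsto_const_nhds (x := L))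
    simpa [hR] using h1
  intro δ hδ
  have hdecomp : ∀ (n : ℕ) (ω : Ω),
      (n:ℝ)⁻¹ * (∑ t ∈ Finset.Icc 1 n,
        ((g ((t:ℝ)/(n:ℝ)) * ε t ω)^2 - g ((t:ℝ)/(n:ℝ))^2)^2) - c * L = Z n ω + c * R n := by
    intro n ω
    have hterm : ∀ t ∈ Finset.Icc 1 n,
        ((g ((t:ℝ)/(n:ℝ)) * ε t ω)^2 - g ((t:ℝ)/(n:ℝ))^2)^2
          = X n t ω + c * g ((t:ℝ)/(n:ℝ))^4 := by
      intro t _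
      simp only [hX, hψ]
      ring
    rw [Finset.sum_congr rfl hterm, Finset.sum_add_distrib]
    simp only [hZ, hR]
    rw [← Finset.mul_sum]
    ring
  have hev : ∀ᶠ n in atTop, |c * R n| < δ/2 := by
    have h0 : Tendsto (fun n => |c * R n|) atTop (𝓝 0) := by
      simpa using (hRtend.const_mul c).abs
    exact h0.eventually_lt_const (half_pos hδ)
  refine squeeze_zero' (t₀ := atTop)
    (g := fun n : ℕ => (μ {ω | δ/2 ≤ |Z n ω|}).toReal)
    (Filter.Eventually.of_forall fun n => ENNReal.toReal_nonneg) ?_ (hZprob (δ/2) (half_pos hδ))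
  filter_upwards [hev] with n hn
  apply ENNReal.toReal_mono (measure_ne_top μ _)
  apply measure_mono
  intro ω hω
  simp only [Set.mem_setOf_eq] at hω ⊢
  rw [hdecomp n ω] at hω
  have habs : |Z n ω + c * R n| ≤ |Z n ω| + |c * R n| := abs_add_le _ _
  linarith


end
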